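/- Let $f : [0,T] \to \mathbb{R}$ be differentiable with absolutely continuous derivative. For every $x \in [0,T]$, we have $f'(x) = \frac{f(T)-f(0)}{T} + \int_0^T K(x,t)\, f''(t)\, dt$, where $K(x,t) = t/T$ for $0 \le t < x$ and $K(x,t) = (t-T)/T$ for $x < t \le T$. -/

import Mathlib

open Set MeasureTheory intervalIntegral
open scoped Interval

lemma fubini_tri (T : ℝ) (g : ℝ → ℝ) (hg : IntegrableOn g (Ioc 0 T)) :
    ∫ t in Ioc (0:ℝ) T, (∫ s in Ioc (0:ℝ) t, g s) = ∫ s in Ioc (0:ℝ) T, (T - s) * g s := by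
  set μ := volume.restrict (Ioc (0:ℝ) T) with hμ
  haveI : IsFiniteMeasure μ := ⟨by
    rw [hμ, Measure.restrict_apply_univ, Real.volume_Ioc]; exact ENNReal.ofReal_lt_top⟩
  obtain ⟨g', hg'm, hgg'⟩ : ∃ g', StronglyMeasurable g' ∧ g =ᵐ[μ] g' :=
    ⟨hg.1.mk g, hg.1.stronglyMeasurable_mk, hg.1.ae_eq_mk⟩
  have hg'int : Integrable g' μ := hg.congr hgg'
  have hL : EqOn (fun t => ∫ s in Ioc (0:ℝ) t, g s) (fun t => ∫ s in Ioc (0:ℝ) t, g' s)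
      (Ioc (0:ℝ) T) := by
    intro t ht
    exact integral_congr_ae
      (hgg'.filter_mono (ae_mono (Measure.restrict_mono (Ioc_subset_Ioc_right ht.2) le_rfl)))
  rw [setIntegral_congr_fun measurableSet_Ioc hL]
  have hR : ∫ s in Ioc (0:ℝ) T, (T - s) * g s = ∫ s in Ioc (0:ℝ) T, (T - s) * g' s :=
    integral_congr_ae (hgg'.mono fun s h => by dsimp only; rw [h])
  rw [hR]
  set H : ℝ → ℝ → ℝ := fun t s => (Iic t).indicator g' s with hH
  have hswap : ∫ t, (∫ s, H t s ∂μ) ∂μ = ∫ s, (∫ t, H t s ∂μ) ∂μ := by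
    apply integral_integral_swap
    have hbase : Integrable (fun p : ℝ × ℝ => g' p.2) (μ.prod μ) := by
      have h1 := (integrable_const (1:ℝ) (μ := μ)).mul_prod hg'int
      simpa using h1
    have heq : Function.uncurry H =
        {q : ℝ × ℝ | q.2 ≤ q.1}.indicator (fun q => g' q.2) := by
      ext p
      by_cases h : p.2 ≤ p.1 <;> simp [Function.uncurry, hH, Set.indicator, h]
    rw [heq]
    exact hbase.indicator (measurableSet_le measurable_snd measurable_fst)
  have hLH : ∫ t in Ioc (0:ℝ) T, (∫ s in Ioc (0:ℝ) t, g' s) = ∫ t, (∫ s, H t s ∂μ) ∂μ := by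
    refine setIntegral_congr_fun measurableSet_Ioc (fun t ht => ?_)
    have : ∫ s, H t s ∂μ = ∫ s in Ioc (0:ℝ) T ∩ Iic t, g' s := by
      rw [hμ]; exact setIntegral_indicator measurableSet_Iic
    rw [this, Ioc_inter_Iic, min_eq_right ht.2]
  have hRH : ∫ s, (∫ t, H t s ∂μ) ∂μ = ∫ s in Ioc (0:ℝ) T, (T - s) * g' s := by
    refine setIntegral_congr_fun measurableSet_Ioc (fun s hs => ?_)
    have h1 : (fun t => H t s) = (Ici s).indicator (fun _ => g' s) := by
      ext t
      by_cases h : s ≤ t <;> simp [hH, Set.indicator, h]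
    have h2 : Ioc (0:ℝ) T ∩ Ici s = Icc s T := by
      ext t
      simp only [mem_inter_iff, mem_Ioc, mem_Ici, mem_Icc]
      constructor
      · rintro ⟨⟨_, h2⟩, h3⟩; exact ⟨h3, h2⟩
      · rintro ⟨h1, h2⟩; exact ⟨⟨lt_of_lt_of_le hs.1 h1, h2⟩, h1⟩
    rw [h1, hμ, setIntegral_indicator measurableSet_Ici, h2, setIntegral_const,
      Real.volume_real_Icc_of_le hs.2, smul_eq_mul]
  rw [hLH, hswap, hRH]

lemma parts_tri (T : ℝ) (hT : 0 < T) (g : ℝ → ℝ) (hg : IntervalIntegrable g volume 0 T) :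
    ∫ t in (0:ℝ)..T, (∫ s in (0:ℝ)..t, g s) = ∫ s in (0:ℝ)..T, (T - s) * g s := by
  rw [integral_of_le hT.le, integral_of_le hT.le,
    setIntegral_congr_fun measurableSet_Ioc
      (fun t (ht : t ∈ Ioc (0:ℝ) T) => integral_of_le ht.1.le)]
  exact fubini_tri T g ((intervalIntegrable_iff_integrableOn_Ioc_of_le hT.le).mp hg)


/-- The Peano kernel for Landau's problem: `K x t = t/T` for `t < x`,
`(t-T)/T` for `t > x`. -/
noncomputable def peanoK (T x t : ℝ) : ℝ := if t < x then t / T else (t - T) / T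

/-- **Peano kernel identity.** If `f : [0,T] → ℝ` is differentiable with
absolutely continuous derivative `f'` (expressed via the integral
representation `f' t = f' 0 + ∫₀ᵗ f''` with `f''` integrable), then for all
`x ∈ [0,T]`, `f'(x) = (f(T) - f(0))/T + ∫₀ᵀ K(x,t) f''(t) dt`. -/
theorem peano_kernel_identity
    (T : ℝ) (hT : 0 < T) (f f' f'' : ℝ → ℝ)
    (hderiv : ∀ t ∈ Icc 0 T, HasDerivWithinAt f (f' t) (Icc 0 T) t)
    (hint : IntervalIntegrable f'' volume 0 T)
    (hAC : ∀ t ∈ Icc 0 T, f' t = f' 0 + ∫ s in (0:ℝ)..t, f'' s) :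
    ∀ x ∈ Icc 0 T,
      f' x = (f T - f 0) / T + ∫ t in (0:ℝ)..T, peanoK T x t * f'' t := by
  have huIcc : uIcc (0:ℝ) T = Icc 0 T := uIcc_of_le hT.le
  have hcontP : ContinuousOn (fun t => ∫ s in (0:ℝ)..t, f'' s) (Icc 0 T) := by
    have := continuousOn_primitive_interval' hint (left_mem_uIcc (a := (0:ℝ)) (b := T))
    rwa [huIcc] at this
  have hPint : IntervalIntegrable (fun t => ∫ s in (0:ℝ)..t, f'' s) volume 0 T :=
    ContinuousOn.intervalIntegrable (by rwa [huIcc])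
  have hcontf' : ContinuousOn f' (Icc 0 T) :=
    (continuousOn_const.add hcontP).congr (fun t ht => hAC t ht)
  have hf'int : IntervalIntegrable f' volume 0 T :=
    ContinuousOn.intervalIntegrable (by rwa [huIcc])
  have hftc : ∫ t in (0:ℝ)..T, f' t = f T - f 0 :=
    integral_eq_sub_of_hasDeriv_right_of_le hT.le
      (fun t ht => (hderiv t ht).continuousWithinAt)
      (fun t ht => ((hderiv t (mem_Icc_of_Ioo ht)).hasDerivAt
        (Icc_mem_nhds ht.1 ht.2)).hasDerivWithinAt) hf'int
  have key : f T - f 0 = T * f' 0 + ∫ s in (0:ℝ)..T, (T - s) * f'' s := by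
    rw [← hftc, integral_congr (g := fun t => f' 0 + ∫ s in (0:ℝ)..t, f'' s)
      (fun t ht => hAC t (huIcc ▸ ht)),
      integral_add (intervalIntegrable_const) hPint, intervalIntegral.integral_const,
      parts_tri T hT f'' hint]
    simp [smul_eq_mul]
  intro x hx
  have hx0 : (0:ℝ) ≤ x := hx.1
  have hxT : x ≤ T := hx.2
  have hsub1 : uIcc (0:ℝ) x ⊆ uIcc (0:ℝ) T := by
    rw [huIcc, uIcc_of_le hx0]; exact Icc_subset_Icc le_rfl hxT
  have hsub2 : uIcc x T ⊆ uIcc (0:ℝ) T := by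
    rw [huIcc, uIcc_of_le hxT]; exact Icc_subset_Icc hx0 le_rfl
  have h1 : IntervalIntegrable f'' volume 0 x := hint.mono_set hsub1
  have h2 : IntervalIntegrable f'' volume x T := hint.mono_set hsub2
  have h1' : IntervalIntegrable (fun t => t * f'' t) volume 0 x :=
    h1.continuousOn_mul continuousOn_id
  have h2' : IntervalIntegrable (fun t => t * f'' t) volume x T :=
    h2.continuousOn_mul continuousOn_id
  have hT' : IntervalIntegrable (fun t => t * f'' t) volume 0 T :=
    hint.continuousOn_mul continuousOn_id
  have hx_ae : ∀ᵐ t ∂(volume : Measure ℝ), t ≠ x := by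
    rw [ae_iff]
    simpa using measure_singleton x
  -- kernel equals t/T on (0,x] a.e., (t-T)/T on (x,T]
  have hcg1 : ∀ᵐ t ∂(volume : Measure ℝ), t ∈ Ι (0:ℝ) x →
      peanoK T x t * f'' t = 1/T * (t * f'' t) := by
    filter_upwards [hx_ae] with t htx ht
    rw [uIoc_of_le hx0] at ht
    have hlt : t < x := lt_of_le_of_ne ht.2 htx
    simp only [peanoK, if_pos hlt]
    ring
  have hcg2 : ∀ᵐ t ∂(volume : Measure ℝ), t ∈ Ι x T →
      peanoK T x t * f'' t = 1/T * (t * f'' t) - f'' t := by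
    refine Filter.Eventually.of_forall fun t ht => ?_
    rw [uIoc_of_le hxT] at ht
    have : ¬ t < x := not_lt.2 ht.1.le
    simp only [peanoK, if_neg this]
    field_simp
  have e1 : (fun t => peanoK T x t * f'' t)
      =ᵐ[volume.restrict (Ι (0:ℝ) x)] (fun t => 1/T * (t * f'' t)) :=
    (ae_restrict_iff' measurableSet_uIoc).2 hcg1
  have e2 : (fun t => peanoK T x t * f'' t)
      =ᵐ[volume.restrict (Ι x T)] (fun t => 1/T * (t * f'' t) - f'' t) :=
    (ae_restrict_iff' measurableSet_uIoc).2 hcg2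
  have hK1 : IntervalIntegrable (fun t => peanoK T x t * f'' t) volume 0 x := by
    rw [intervalIntegrable_iff] at h1' ⊢
    exact (h1'.const_mul (1/T)).congr e1.symm
  have hK2 : IntervalIntegrable (fun t => peanoK T x t * f'' t) volume x T := by
    rw [intervalIntegrable_iff] at h2' h2 ⊢
    exact ((h2'.const_mul (1/T)).sub h2).congr e2.symm
  have hsplit : ∫ t in (0:ℝ)..T, peanoK T x t * f'' t =
      (∫ t in (0:ℝ)..x, peanoK T x t * f'' t) + ∫ t in x..T, peanoK T x t * f'' t :=
    (integral_add_adjacent_intervals hK1 hK2).symm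
  have hv1 : ∫ t in (0:ℝ)..x, peanoK T x t * f'' t
      = 1/T * ∫ t in (0:ℝ)..x, t * f'' t := by
    rw [integral_congr_ae hcg1, intervalIntegral.integral_const_mul]
  have hv2 : ∫ t in x..T, peanoK T x t * f'' t
      = 1/T * (∫ t in x..T, t * f'' t) - ∫ t in x..T, f'' t := by
    rw [integral_congr_ae hcg2, integral_sub (h2'.const_mul (1/T)) h2, intervalIntegral.integral_const_mul]
  have hw : ∫ s in (0:ℝ)..T, (T - s) * f'' s
      = T * ((∫ t in (0:ℝ)..x, f'' t) + ∫ t in x..T, f'' t)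
        - ((∫ t in (0:ℝ)..x, t * f'' t) + ∫ t in x..T, t * f'' t) := by
    rw [integral_congr (g := fun s => T * f'' s - s * f'' s) (fun s _ => by ring),
      integral_sub (hint.const_mul T) hT', intervalIntegral.integral_const_mul,
      integral_add_adjacent_intervals h1 h2, integral_add_adjacent_intervals h1' h2']
  rw [hAC x hx, key, hsplit, hv1, hv2, hw]
  field_simp
  ring
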